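/- Let n ≥ 3 and let |C^{n-1}Z⟩ = (1/√{2^n}) ∑_{b∈{0,1}^n} (−1)^{b₁b₂⋯b_n} |b⟩. For bit strings x, z ∈ {0,1}^n, the Pauli expectation satisfies: ⟨C^{n-1}Z| X^x Z^z |C^{n-1}Z⟩ equals 1 if x = z = 0; equals 0 if x = 0 and z ≠ 0; equals 1 − 2^{2−n} if x ≠ 0 and z = 0; and equals (−2(−1)^{z·1} − 2(−1)^{z·(1⊕x)})/2^n if x ≠ 0 and z ≠ 0, where 1 denotes the all-ones string, · the inner product mod 2, and ⊕ bitwise XOR. -/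

import Mathlib

open Complex Matrix

/-- The `n`-qubit state `|C^{n-1}Z⟩` with amplitude `(−1)^{b₁⋯b_n}/√(2^n)` on `|b⟩`. -/
noncomputable def cnzState (n : ℕ) : (Fin n → Bool) → ℂ :=
  fun b => (if ∀ k, b k = true then (-1 : ℂ) else 1) / Real.sqrt (2 ^ n)

/-- The Pauli operator `X^x Z^z = ⊗_k X^{x_k} Z^{z_k}`, with matrix entries
`⟨b'|X^x Z^z|b⟩ = δ_{b', b⊕x} (−1)^{z·b}`. -/
noncomputable def pauliXZ (n : ℕ) (x z : Fin n → Bool) :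
    Matrix (Fin n → Bool) (Fin n → Bool) ℂ :=
  fun b' b => (if b' = fun k => xor (b k) (x k) then 1 else 0) *
    (-1 : ℂ) ^ (Finset.univ.filter (fun k => z k = true ∧ b k = true)).card

lemma cnz_sum_sign (n : ℕ) (z : Fin n → Bool) :
    ∑ b : Fin n → Bool, (-1:ℂ)^(Finset.univ.filter (fun k => z k = true ∧ b k = true)).card
    = if z = (fun _ => false) then (2:ℂ)^n else 0 := by
  have h1 : ∀ b : Fin n → Bool,
      (-1:ℂ)^(Finset.univ.filter (fun k => z k = true ∧ b k = true)).card
      = ∏ k : Fin n, (if z k = true ∧ b k = true then (-1:ℂ) else 1) := by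
    intro b
    rw [Finset.prod_ite, Finset.prod_const, Finset.prod_const, one_pow, mul_one]
  simp only [h1]
  have h2 : ∑ b ∈ Fintype.piFinset (fun _ : Fin n => (Finset.univ : Finset Bool)),
      ∏ k : Fin n, (if z k = true ∧ b k = true then (-1:ℂ) else 1)
      = ∏ k : Fin n, ∑ c : Bool, (if z k = true ∧ c = true then (-1:ℂ) else 1) :=
    (Finset.prod_univ_sum (fun _ => (Finset.univ : Finset Bool))
      (fun k c => if z k = true ∧ c = true then (-1:ℂ) else 1)).symm
  rw [Fintype.piFinset_univ] at h2
  rw [h2]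
  have h3 : ∀ k, (∑ c : Bool, (if z k = true ∧ c = true then (-1:ℂ) else 1))
      = if z k = true then 0 else 2 := by
    intro k; cases hz : z k <;> simp [Fintype.sum_bool]
  simp only [h3]
  by_cases hz : z = fun _ => false
  · subst hz; simp
  · rw [if_neg hz]
    have : ∃ k, z k = true := by
      by_contra h
      push_neg at h
      exact hz (funext fun k => by simpa using h k)
    obtain ⟨k, hk⟩ := this
    exact Finset.prod_eq_zero (Finset.mem_univ k) (by simp [hk])

lemma cnz_E_eq (n : ℕ) (x z : Fin n → Bool) :
    dotProduct (star (cnzState n)) ((pauliXZ n x z).mulVec (cnzState n))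
    = (∑ b : Fin n → Bool,
        (if ∀ k, (xor (b k) (x k)) = true then (-1:ℂ) else 1) *
        (if ∀ k, b k = true then (-1:ℂ) else 1) *
        (-1 : ℂ) ^ (Finset.univ.filter (fun k => z k = true ∧ b k = true)).card) / 2^n := by
  rw [dotProduct, Finset.sum_div]
  simp only [Matrix.mulVec, dotProduct, pauliXZ, Pi.star_apply]
  simp only [Finset.mul_sum]
  rw [Finset.sum_comm]
  refine Finset.sum_congr rfl fun b _ => ?_
  rw [Finset.sum_eq_single (fun k => xor (b k) (x k))]
  · simp only [if_pos rfl, one_mul, cnzState]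
    have hsq : (Real.sqrt (2 ^ n) : ℂ) * (Real.sqrt (2 ^ n) : ℂ) = 2 ^ n := by
      rw [← Complex.ofReal_mul, Real.mul_self_sqrt (by positivity)]
      push_cast; ring
    have hstar : star (if ∀ k, xor (b k) (x k) = true then (-1 : ℂ) else 1)
        = (if ∀ k, xor (b k) (x k) = true then (-1 : ℂ) else 1) := by
      split_ifs <;> simp
    rw [star_div₀, hstar, Complex.star_def, Complex.conj_ofReal]
    field_simp
    rw [sq, hsq, if_pos trivial]
    ring
  · intro b' _ hb'
    simp [if_neg hb']
  · simp

/-- For `n ≥ 3`, the Pauli expectations of `|C^{n-1}Z⟩` are: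
`1` if `x = z = 0`; `0` if `x = 0, z ≠ 0`; `1 − 2^{2−n}` if `x ≠ 0, z = 0`; and
`(−2(−1)^{z·1} − 2(−1)^{z·(1⊕x)})/2^n` if `x ≠ 0, z ≠ 0`. -/
theorem cnz_pauli_expectation (n : ℕ) (hn : 3 ≤ n) (x z : Fin n → Bool)
    (E : ℂ)
    (hE : E = dotProduct (star (cnzState n)) ((pauliXZ n x z).mulVec (cnzState n))) :
    ((x = fun _ => false) → (z = fun _ => false) → E = 1) ∧
    ((x = fun _ => false) → z ≠ (fun _ => false) → E = 0) ∧
    (x ≠ (fun _ => false) → (z = fun _ => false) → E = 1 - 4 / 2 ^ n) ∧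
    (x ≠ (fun _ => false) → z ≠ (fun _ => false) →
      E = (-2 * (-1 : ℂ) ^ (Finset.univ.filter (fun k => z k = true)).card -
            2 * (-1 : ℂ) ^ (Finset.univ.filter (fun k => z k = true ∧ x k = false)).card) /
          2 ^ n) := by
  rw [cnz_E_eq] at hE
  have h2n : (2:ℂ)^n ≠ 0 := pow_ne_zero _ two_ne_zero
  have hx0 : x = (fun _ => false) → E = if z = (fun _ => false) then 1 else 0 := by
    intro hx
    subst hx
    rw [hE]
    have hb : ∀ b : Fin n → Bool,
        ((if ∀ k, (xor (b k) ((fun _ => false) k : Bool)) = true then (-1:ℂ) else 1) *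
        (if ∀ k, b k = true then (-1:ℂ) else 1)) = 1 := by
      intro b
      simp only [Bool.xor_false]
      split_ifs <;> ring
    simp only [hb, one_mul]
    rw [cnz_sum_sign]
    split_ifs with h
    · exact div_self h2n
    · exact zero_div _
  have hx1 : x ≠ (fun _ => false) →
      E = ((if z = (fun _ => false) then (2:ℂ)^n else 0)
           - 2 * (-1:ℂ)^(Finset.univ.filter (fun k => z k = true)).card
           - 2 * (-1:ℂ)^(Finset.univ.filter (fun k => z k = true ∧ x k = false)).card) / 2^n := by
    intro hx
    obtain ⟨k0, hk0⟩ : ∃ k, x k = true := by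
      by_contra h; push_neg at h
      exact hx (funext fun k => by simpa using h k)
    rw [hE]
    have key : ∀ b : Fin n → Bool,
        (if ∀ k, (xor (b k) (x k)) = true then (-1:ℂ) else 1) *
        (if ∀ k, b k = true then (-1:ℂ) else 1) *
        (-1:ℂ)^(Finset.univ.filter (fun k => z k = true ∧ b k = true)).card
        = (-1:ℂ)^(Finset.univ.filter (fun k => z k = true ∧ b k = true)).card
          - (if b = (fun _ => true) then
              2 * (-1:ℂ)^(Finset.univ.filter (fun k => z k = true ∧ b k = true)).card else 0)
          - (if b = (fun k => !(x k)) then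
              2 * (-1:ℂ)^(Finset.univ.filter (fun k => z k = true ∧ b k = true)).card else 0) := by
      intro b
      have h1 : ((∀ k, (xor (b k) (x k)) = true) ↔ b = fun k => !(x k)) := by
        constructor
        · intro h; funext k; have := h k
          cases hxk : x k <;> cases hbk : b k <;> simp_all
        · intro h k; rw [h]; cases hxk : x k <;> simp [hxk]
      have h2 : ((∀ k, b k = true) ↔ b = fun _ => true) := by
        constructor
        · intro h; funext k; exact h k
        · intro h k; rw [h]
      by_cases hb1 : b = (fun _ => true) <;> by_cases hb2 : b = (fun k => !(x k))
      · exfalso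
        have := congrFun (hb1.symm.trans hb2) k0
        simp [hk0] at this
      · simp only [h1, h2, if_pos hb1, if_neg hb2]; ring
      · simp only [h1, h2, if_neg hb1, if_pos hb2]; ring
      · simp only [h1, h2, if_neg hb1, if_neg hb2]; ring
    simp only [key]
    rw [Finset.sum_sub_distrib, Finset.sum_sub_distrib, cnz_sum_sign,
      Finset.sum_ite_eq' Finset.univ (fun _ => true)
        (fun b => 2 * (-1:ℂ)^(Finset.univ.filter (fun k => z k = true ∧ b k = true)).card),
      Finset.sum_ite_eq' Finset.univ (fun k => !(x k))
        (fun b => 2 * (-1:ℂ)^(Finset.univ.filter (fun k => z k = true ∧ b k = true)).card)]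
    simp only [Finset.mem_univ, if_true]
    congr 2
    · congr 2
      simp [Bool.not_eq_true']
    · congr 2
      simp [Bool.not_eq_true']
  refine ⟨?_, ?_, ?_, ?_⟩
  · intro hx hz
    rw [hx0 hx, if_pos hz]
  · intro hx hz
    rw [hx0 hx, if_neg hz]
  · intro hx hz
    rw [hx1 hx, if_pos hz]
    subst hz
    simp only [Bool.false_eq_true, false_and, Finset.filter_false, Finset.card_empty, pow_zero]
    · field_simp
      ring
  · intro hx hz
    rw [hx1 hx, if_neg hz]
    ring
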